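/- For all real x, the ratio Φ(x)/φ(x) equals Σ_{k=0}^∞ x^{2k+1}/(2k+1)!! + (√(2π)/2)·Σ_{k=0}^∞ x^{2k}/(2k)!!, with both series converging everywhere. -/

import Mathlib

open Real Nat MeasureTheory

private lemma dfact_even_le_odd (k : ℕ) : (2 * k)‼ ≤ (2 * k + 1)‼ := by
  induction k with
  | zero => simp [Nat.doubleFactorial]
  | succ n ih =>
    have h1 : 2 * (n + 1) = 2 * n + 2 := by ring
    have h2 : 2 * (n + 1) + 1 = (2 * n + 1) + 2 := by ring
    rw [h2, h1, Nat.doubleFactorial_add_two, Nat.doubleFactorial_add_two]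
    exact Nat.mul_le_mul (by omega) ih

private lemma dfact_ge (k : ℕ) : (2:ℝ) ^ k * (k ! : ℝ) ≤ ((2 * k + 1)‼ : ℝ) := by
  have h := dfact_even_le_odd k
  have h2 : (2 * k)‼ = 2 ^ k * k ! := Nat.doubleFactorial_two_mul k
  exact_mod_cast h2 ▸ h

private lemma summable_aux (y : ℝ) :
    Summable (fun n : ℕ => (2 * (n : ℝ) + 1) * y ^ n / n !) := by
  have h1 : Summable (fun n : ℕ => (n : ℝ) * y ^ n / n !) := by
    apply (summable_nat_add_iff 1).mp
    apply ((Real.summable_pow_div_factorial y).mul_left y).congr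
    intro n
    have hne : (n ! : ℝ) ≠ 0 := by exact_mod_cast Nat.factorial_ne_zero n
    rw [Nat.factorial_succ]
    push_cast
    field_simp
    ring
  have h2 := Real.summable_pow_div_factorial y
  apply ((h1.mul_left 2).add h2).congr
  intro n
  ring

private lemma norm_deriv_le (R : ℝ) (y : ℝ) (hy : |y| ≤ R) (n : ℕ) :
    ‖(2 * (n : ℝ) + 1) * y ^ (2 * n) / ((2 * n + 1)‼ : ℝ)‖ ≤
      (2 * (n : ℝ) + 1) * (R ^ 2 / 2) ^ n / n ! := by
  have hfac := dfact_ge n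
  have hpos : (0:ℝ) < (2:ℝ) ^ n * n ! := by positivity
  have hdpos : (0:ℝ) < ((2 * n + 1)‼ : ℝ) := by
    exact_mod_cast Nat.doubleFactorial_pos _
  have h1 : ‖(2 * (n : ℝ) + 1) * y ^ (2 * n) / ((2 * n + 1)‼ : ℝ)‖ =
      (2 * (n : ℝ) + 1) * |y| ^ (2 * n) / ((2 * n + 1)‼ : ℝ) := by
    rw [Real.norm_eq_abs, abs_div, abs_mul, abs_pow,
      abs_of_nonneg (by positivity : (0:ℝ) ≤ 2 * (n:ℝ) + 1), abs_of_nonneg hdpos.le]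
  have h2 : (2 * (n : ℝ) + 1) * (R ^ 2 / 2) ^ n / n ! =
      (2 * (n : ℝ) + 1) * (R ^ (2 * n) / ((2:ℝ) ^ n * n !)) := by
    rw [div_pow, pow_mul]
    field_simp
  have hRnn : (0:ℝ) ≤ R := le_trans (abs_nonneg y) hy
  rw [h1, h2, mul_div_assoc]
  apply mul_le_mul_of_nonneg_left _ (by positivity : (0:ℝ) ≤ 2 * (n:ℝ) + 1)
  apply div_le_div₀ (pow_nonneg hRnn _) (pow_le_pow_left₀ (abs_nonneg y) hy _) hpos hfac

private lemma summable_deriv (x : ℝ) :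
    Summable (fun n : ℕ => (2 * (n : ℝ) + 1) * x ^ (2 * n) / ((2 * n + 1)‼ : ℝ)) := by
  apply Summable.of_norm
  exact Summable.of_nonneg_of_le (fun n => norm_nonneg _)
    (fun n => norm_deriv_le (|x|) x le_rfl n)
    ((summable_aux (|x| ^ 2 / 2)).congr (fun n => rfl))

private lemma summable_odd (x : ℝ) :
    Summable (fun k : ℕ => x ^ (2 * k + 1) / ((2 * k + 1)‼ : ℝ)) := by
  apply Summable.of_norm
  refine Summable.of_nonneg_of_le (fun n => norm_nonneg _) (fun n => ?_)
    ((Real.summable_pow_div_factorial (x ^ 2 / 2)).mul_left |x|)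
  have hfac := dfact_ge n
  have hpos : (0:ℝ) < (2:ℝ) ^ n * n ! := by positivity
  have hdpos : (0:ℝ) < ((2 * n + 1)‼ : ℝ) := by
    exact_mod_cast Nat.doubleFactorial_pos _
  have h1 : ‖x ^ (2 * n + 1) / ((2 * n + 1)‼ : ℝ)‖ =
      |x| * |x| ^ (2 * n) / ((2 * n + 1)‼ : ℝ) := by
    rw [Real.norm_eq_abs, abs_div, abs_of_nonneg hdpos.le, pow_succ, abs_mul, abs_pow, mul_comm]
  have h2 : |x| * ((x ^ 2 / 2) ^ n / n !) = |x| * (|x| ^ (2 * n) / ((2:ℝ) ^ n * n !)) := by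
    rw [div_pow, pow_mul, sq_abs]
    field_simp
  rw [h1, h2, mul_div_assoc]
  apply mul_le_mul_of_nonneg_left _ (abs_nonneg x)
  exact div_le_div₀ (by positivity) le_rfl hpos hfac

private lemma deriv_sum_eq (x : ℝ) :
    (∑' k : ℕ, (2 * (k : ℝ) + 1) * x ^ (2 * k) / ((2 * k + 1)‼ : ℝ)) =
      1 + x * ∑' k : ℕ, x ^ (2 * k + 1) / ((2 * k + 1)‼ : ℝ) := by
  rw [Summable.tsum_eq_zero_add (summable_deriv x)]
  congr 1
  · norm_num [Nat.doubleFactorial]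
  rw [← tsum_mul_left]
  apply tsum_congr
  intro n
  have h3 : ((2 * (n + 1) + 1)‼ : ℝ) = (2 * (n : ℝ) + 3) * ((2 * n + 1)‼ : ℝ) := by
    have he : 2 * (n + 1) + 1 = (2 * n + 1) + 2 := by ring
    rw [he, Nat.doubleFactorial_add_two]
    push_cast
    ring
  have hdpos : (0:ℝ) < ((2 * n + 1)‼ : ℝ) := by exact_mod_cast Nat.doubleFactorial_pos _
  rw [h3]
  have he : 2 * (n + 1) = (2 * n + 1) + 1 := by ring
  rw [he, pow_succ]
  push_cast
  have h23 : (2 * (n : ℝ) + 3) ≠ 0 := by positivity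
  field_simp
  ring

private lemma hasDerivAt_f (y : ℝ) :
    HasDerivAt (fun z : ℝ => ∑' k : ℕ, z ^ (2 * k + 1) / ((2 * k + 1)‼ : ℝ))
      (1 + y * ∑' k : ℕ, y ^ (2 * k + 1) / ((2 * k + 1)‼ : ℝ)) y := by
  set R : ℝ := |y| + 1 with hR
  have hRpos : (0:ℝ) < R := by positivity
  have key := hasDerivAt_tsum_of_isPreconnected
    (u := fun n : ℕ => (2 * (n : ℝ) + 1) * (R ^ 2 / 2) ^ n / n !)
    (g := fun (n : ℕ) (z : ℝ) => z ^ (2 * n + 1) / ((2 * n + 1)‼ : ℝ))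
    (g' := fun (n : ℕ) (z : ℝ) => (2 * (n : ℝ) + 1) * z ^ (2 * n) / ((2 * n + 1)‼ : ℝ))
    (summable_aux (R ^ 2 / 2)) Metric.isOpen_ball (convex_ball (0:ℝ) R).isPreconnected
    (fun n z _ => ?_) (fun n z hz => ?_) (y₀ := (0:ℝ)) ?_ ?_ (y := y) ?_
  · rw [deriv_sum_eq y] at key
    exact key
  · have h := (hasDerivAt_pow (2 * n + 1) z).div_const ((2 * n + 1)‼ : ℝ)
    refine h.congr_deriv ?_
    simp only [Nat.add_sub_cancel]
    push_cast
    ring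
  · have hz' : |z| ≤ R := by
      have := mem_ball_zero_iff.mp hz
      rw [Real.norm_eq_abs] at this
      linarith
    exact norm_deriv_le R z hz' n
  · rw [mem_ball_zero_iff, Real.norm_eq_abs, abs_zero]
    exact hRpos
  · apply summable_zero.congr
    intro n
    simp
  · rw [mem_ball_zero_iff, Real.norm_eq_abs]
    simp [hR]

private lemma integral_eq (x : ℝ) :
    (∫ t in (0:ℝ)..x, Real.exp (-t ^ 2 / 2)) =
      Real.exp (-x ^ 2 / 2) * ∑' k : ℕ, x ^ (2 * k + 1) / ((2 * k + 1)‼ : ℝ) := by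
  set f : ℝ → ℝ := fun z => ∑' k : ℕ, z ^ (2 * k + 1) / ((2 * k + 1)‼ : ℝ) with hf
  set F : ℝ → ℝ := fun z => Real.exp (-z ^ 2 / 2) * f z -
      ∫ t in (0:ℝ)..z, Real.exp (-t ^ 2 / 2) with hFdef
  have hcont : Continuous fun t : ℝ => Real.exp (-t ^ 2 / 2) := by continuity
  have hder : ∀ y : ℝ, HasDerivAt F 0 y := by
    intro y
    have h1 : HasDerivAt (fun z : ℝ => Real.exp (-z ^ 2 / 2)) (-y * Real.exp (-y ^ 2 / 2)) y := by
      have hq : HasDerivAt (fun z : ℝ => -z ^ 2 / 2) (-y) y := by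
        have := ((hasDerivAt_pow 2 y).neg).div_const 2
        refine this.congr_deriv ?_
        push_cast
        ring
      have := hq.exp
      convert this using 1
      ring
    have h2 : HasDerivAt f (1 + y * f y) y := hasDerivAt_f y
    have h3 : HasDerivAt (fun z : ℝ => ∫ t in (0:ℝ)..z, Real.exp (-t ^ 2 / 2))
        (Real.exp (-y ^ 2 / 2)) y := (hcont.integral_hasStrictDerivAt 0 y).hasDerivAt
    have := (h1.mul h2).sub h3
    refine this.congr_deriv ?_
    ring
  have hconst := is_const_of_deriv_eq_zero (fun y => (hder y).differentiableAt)
    (fun y => (hder y).deriv) x 0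
  have hf0 : f 0 = 0 := by
    have h0 : ∀ k : ℕ, (0:ℝ) ^ (2 * k + 1) / ((2 * k + 1)‼ : ℝ) = 0 := fun k => by simp
    show (∑' k : ℕ, (0:ℝ) ^ (2 * k + 1) / ((2 * k + 1)‼ : ℝ)) = 0
    rw [tsum_congr h0, tsum_zero]
  have hF0 : F 0 = 0 := by
    simp [hFdef, hf0]
  rw [hF0] at hconst
  have : Real.exp (-x ^ 2 / 2) * f x - ∫ t in (0:ℝ)..x, Real.exp (-t ^ 2 / 2) = 0 := hconst
  linarith

private lemma gauss_integrable :
    Integrable (fun t : ℝ => Real.exp (-t ^ 2 / 2)) := by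
  have h := integrable_exp_neg_mul_sq (b := (1/2 : ℝ)) (by norm_num)
  have he : (fun t : ℝ => Real.exp (-t ^ 2 / 2)) = fun t : ℝ => Real.exp (-(1/2) * t ^ 2) := by
    funext t; congr 1; ring
  rw [he]
  exact h

private lemma gauss_Iic_zero :
    (∫ t in Set.Iic (0:ℝ), Real.exp (-t ^ 2 / 2)) = Real.sqrt (2 * π) / 2 := by
  have he : (fun t : ℝ => Real.exp (-t ^ 2 / 2)) = fun t : ℝ => Real.exp (-(1/2) * t ^ 2) := by
    funext t; congr 1; ring
  have h2 : (∫ t in Set.Iic (0:ℝ), Real.exp (-(1/2) * t ^ 2)) =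
      ∫ t in Set.Ioi (0:ℝ), Real.exp (-(1/2) * t ^ 2) := by
    have := integral_comp_neg_Iic (0:ℝ) (fun t : ℝ => Real.exp (-(1/2) * t ^ 2))
    simp only [neg_zero] at this
    rw [← this]
    congr 1
    funext t
    congr 1
    ring
  calc (∫ t in Set.Iic (0:ℝ), Real.exp (-t ^ 2 / 2))
      = ∫ t in Set.Ioi (0:ℝ), Real.exp (-(1/2) * t ^ 2) := by rw [he]; exact h2
    _ = Real.sqrt (π / (1/2)) / 2 := integral_gaussian_Ioi (1/2)
    _ = Real.sqrt (2 * π) / 2 := by norm_num [mul_comm]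

theorem Phi_div_phi_series (x : ℝ) :
    Summable (fun k : ℕ => x ^ (2 * k + 1) / ((2 * k + 1)‼ : ℝ)) ∧
    Summable (fun k : ℕ => x ^ (2 * k) / ((2 * k)‼ : ℝ)) ∧
    (∫ t in Set.Iic x, Real.exp (-t ^ 2 / 2)) / Real.exp (-x ^ 2 / 2) =
      (∑' k : ℕ, x ^ (2 * k + 1) / ((2 * k + 1)‼ : ℝ)) +
        Real.sqrt (2 * π) / 2 * ∑' k : ℕ, x ^ (2 * k) / ((2 * k)‼ : ℝ) := by
  have hterm : ∀ k : ℕ, x ^ (2 * k) / ((2 * k)‼ : ℝ) = (x ^ 2 / 2) ^ k / k ! := by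
    intro k
    have h : ((2 * k)‼ : ℝ) = 2 ^ k * k ! := by
      exact_mod_cast Nat.doubleFactorial_two_mul k
    rw [h, pow_mul, div_pow, div_div]
  have heven : Summable (fun k : ℕ => x ^ (2 * k) / ((2 * k)‼ : ℝ)) :=
    (Real.summable_pow_div_factorial (x ^ 2 / 2)).congr fun k => (hterm k).symm
  refine ⟨summable_odd x, heven, ?_⟩
  have hsum2 : (∑' k : ℕ, x ^ (2 * k) / ((2 * k)‼ : ℝ)) = Real.exp (x ^ 2 / 2) := by
    rw [tsum_congr hterm, Real.exp_eq_exp_ℝ, NormedSpace.exp_eq_tsum_div]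
  have hIic : (∫ t in Set.Iic x, Real.exp (-t ^ 2 / 2)) =
      Real.sqrt (2 * π) / 2 +
        Real.exp (-x ^ 2 / 2) * ∑' k : ℕ, x ^ (2 * k + 1) / ((2 * k + 1)‼ : ℝ) := by
    have hsub := intervalIntegral.integral_Iic_sub_Iic (μ := volume)
      (gauss_integrable.integrableOn) (gauss_integrable.integrableOn)
      (a := (0:ℝ)) (b := x)
    rw [gauss_Iic_zero, integral_eq x] at hsub
    linarith
  rw [hIic, hsum2]
  have hE : Real.exp (-x ^ 2 / 2) = (Real.exp (x ^ 2 / 2))⁻¹ := by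
    rw [← Real.exp_neg]
    congr 1
    ring
  rw [hE]
  have hEne : Real.exp (x ^ 2 / 2) ≠ 0 := Real.exp_ne_zero _
  field_simp
  ring
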